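/- Let (N_i) be nonnegative integer matrices indexed by a finite set I with 0 ∈ I, an involution * on I with N_i^T = N_{i*}, and suppose d = (d_i) is a nonzero complex vector with d_0 = 1 satisfying N_i d = d_i d for all i. Then conjugate(d_{i*}) = d_i for all i. In particular, in a pivotal fusion category over ℂ, dim(V*) = conjugate(dim(V)) for every simple object V, so |V|² = |dim(V)|². -/
import Mathlib


/-- If `(N i)` are nonnegative integer matrices with `N iᵀ = N (σ i)` for an involution
`σ`, and `d` is a nonzero complex common eigenvector with `N i d = d i • d` and `d z = 1`,
then `conj (d (σ i)) = d i` for all `i`.  (In a pivotal fusion category over ℂ this says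
`dim(V*) = conj (dim V)`, hence `|V|² = |dim V|²`.) -/
theorem stmt5 (I : Type*) [Fintype I] (z : I)
    (σ : I → I) (hσ : ∀ i, σ (σ i) = i)
    (N : I → Matrix I I ℤ) (hnn : ∀ i j k, 0 ≤ N i j k)
    (hNT : ∀ i, (N i).transpose = N (σ i))
    (d : I → ℂ) (hd0 : d z = 1) (hdne : d ≠ 0)
    (heig : ∀ i, ((N i).map (fun x : ℤ => (x : ℂ))).mulVec d = d i • d) :
    ∀ i, starRingEnd ℂ (d (σ i)) = d i := by
  set c := starRingEnd ℂ with hc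
  set S : ℂ := ∑ j, c (d j) * d j with hS
  have heig' : ∀ i j, ∑ k, (N i j k : ℂ) * d k = d i * d j := by
    intro i j
    have := congrFun (heig i) j
    simpa [Matrix.mulVec, dotProduct, Matrix.map_apply] using this
  have hSreal : S = (↑(∑ j, Complex.normSq (d j)) : ℂ) := by
    rw [hS]
    push_cast
    refine Finset.sum_congr rfl fun j _ => ?_
    rw [Complex.normSq_eq_conj_mul_self]
  have hSne : S ≠ 0 := by
    rw [hSreal]
    have : (1:ℝ) ≤ ∑ j, Complex.normSq (d j) := by
      have h1 : Complex.normSq (d z) = 1 := by rw [hd0]; simp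
      calc (1:ℝ) = Complex.normSq (d z) := h1.symm
        _ ≤ ∑ j, Complex.normSq (d j) :=
          Finset.single_le_sum (fun j _ => Complex.normSq_nonneg _) (Finset.mem_univ z)
    intro h
    rw [Complex.ofReal_eq_zero] at h
    linarith
  have key : ∀ i, d (σ i) * S = c (d i) * S := by
    intro i
    have h1 : d (σ i) * S = ∑ j, ∑ k, c (d j) * ((N (σ i) j k : ℂ) * d k) := by
      calc d (σ i) * S = ∑ j, c (d j) * (d (σ i) * d j) := by
            rw [hS, Finset.mul_sum]; refine Finset.sum_congr rfl fun j _ => by ring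
        _ = ∑ j, c (d j) * ∑ k, (N (σ i) j k : ℂ) * d k := by
            refine Finset.sum_congr rfl fun j _ => by rw [heig']
        _ = _ := by
            refine Finset.sum_congr rfl fun j _ => by rw [Finset.mul_sum]
    have h2 : c (d i) * S = ∑ j, ∑ k, c (d j) * ((N i k j : ℂ) * d k) := by
      have h3 : d i * S = ∑ j, ∑ k, c (d j) * ((N i j k : ℂ) * d k) := by
        calc d i * S = ∑ j, c (d j) * (d i * d j) := by
              rw [hS, Finset.mul_sum]; refine Finset.sum_congr rfl fun j _ => by ring
          _ = ∑ j, c (d j) * ∑ k, (N i j k : ℂ) * d k := by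
              refine Finset.sum_congr rfl fun j _ => by rw [heig']
          _ = _ := by
              refine Finset.sum_congr rfl fun j _ => by rw [Finset.mul_sum]
      have h4 := congrArg c h3
      have hcS : c S = S := by
        rw [hSreal]; exact Complex.conj_ofReal _
      rw [map_mul, hcS] at h4
      rw [h4]
      rw [Finset.sum_comm]
      push_cast [map_sum, map_mul]
      refine Finset.sum_congr rfl fun j _ => Finset.sum_congr rfl fun k _ => ?_
      simp [Complex.conj_conj]
      ring
    rw [h1, h2]
    refine Finset.sum_congr rfl fun j _ => Finset.sum_congr rfl fun k _ => ?_
    have : N (σ i) j k = N i k j := by rw [← hNT i, Matrix.transpose_apply]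
    rw [this]
  intro i
  have := mul_right_cancel₀ hSne (key i)
  rw [this, hc, Complex.conj_conj]
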